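/- arXiv:2510.18151 — 3 statements merged into one kernel-verified Lean document; each statement's English description precedes it below -/
import Mathlib

section
/- Let k be a field and j a natural number. Consider the commutative monoid M = kˣ × (Fin j → ℕ) (the direct product of the unit group of k with the free commutative monoid on j generators), and regard the monoid algebra MonoidAlgebra k M as an algebra over the group algebra MonoidAlgebra k kˣ via the monoid homomorphism u ↦ (u, 0). Regard k as a MonoidAlgebra k kˣ-algebra via the k-algebra homomorphism MonoidAlgebra k kˣ → k induced by the inclusion of monoids kˣ → k. Then there is a k-algebra isomorphism (MonoidAlgebra k M) ⊗[MonoidAlgebra k kˣ] k ≅ MvPolynomial (Fin j) k which sends the class of the basis element of (u, n) ∈ M to u • ∏_{i} Xᵢ^{n i}. -/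
/-!
Statement 0: For a field `k` and `j : ℕ`, let `M = kˣ × ℕ^j` (the direct product of the unit
group of `k` with the free commutative monoid on `j` generators, written multiplicatively).
Regard `MonoidAlgebra k M` as an algebra over `MonoidAlgebra k kˣ` via `u ↦ (u, 0)`, and `k`
as a `MonoidAlgebra k kˣ`-algebra via the `k`-algebra map induced by the inclusion `kˣ → k`.
Then there is a `k`-algebra isomorphism
`(MonoidAlgebra k M) ⊗[MonoidAlgebra k kˣ] k ≃ₐ[k] MvPolynomial (Fin j) k`
sending the class of the basis element of `(u, n) ∈ M` to `u • ∏ i, X i ^ n i`.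
-/

open scoped TensorProduct

namespace Stmt0

variable (k : Type*) [Field k] (j : ℕ)

/-- The commutative monoid `M = kˣ × ℕ^j` (with `ℕ^j` written multiplicatively). -/
abbrev M : Type _ := kˣ × Multiplicative (Fin j → ℕ)

/-- The inclusion of monoids `kˣ → M`, `u ↦ (u, 0)`. -/
def ι : kˣ →* M k j := MonoidHom.inl _ _

/-- A type synonym for the monoid algebra `MonoidAlgebra k M` (used to pin down the
`MonoidAlgebra k kˣ`-algebra structure coming from `u ↦ (u, 0)`). -/
def MA : Type _ := MonoidAlgebra k (M k j)

noncomputable instance : CommSemiring (MA k j) :=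
  inferInstanceAs (CommSemiring (MonoidAlgebra k (M k j)))

noncomputable instance : Algebra k (MA k j) :=
  inferInstanceAs (Algebra k (MonoidAlgebra k (M k j)))

/-- `MonoidAlgebra k M` is an algebra over `MonoidAlgebra k kˣ` via the monoid homomorphism
`u ↦ (u, 0)`. -/
noncomputable instance : Algebra (MonoidAlgebra k kˣ) (MA k j) :=
  ((MonoidAlgebra.mapDomainAlgHom k k (ι k j)).toRingHom :
    MonoidAlgebra k kˣ →+* MA k j).toAlgebra

/-- `k` is an algebra over `MonoidAlgebra k kˣ` via the `k`-algebra homomorphism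
`MonoidAlgebra k kˣ → k` induced by the inclusion of monoids `kˣ → k`. -/
noncomputable instance : Algebra (MonoidAlgebra k kˣ) k :=
  (((MonoidAlgebra.lift k k kˣ) (Units.coeHom k)).toRingHom).toAlgebra

instance : SMulCommClass (MonoidAlgebra k kˣ) k (MA k j) :=
  ⟨fun t c a => by
    simp only [Algebra.smul_def]
    ring⟩

-- AUX START

/-- Pinned pure tensor in `MA k j ⊗[MonoidAlgebra k kˣ] k`. -/
noncomputable def tm (x : MA k j) (c : k) : (MA k j) ⊗[MonoidAlgebra k kˣ] k :=
  x ⊗ₜ[MonoidAlgebra k kˣ] c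

noncomputable def φ : M k j →* MvPolynomial (Fin j) k where
  toFun p := (p.1 : k) • ∏ i, MvPolynomial.X i ^ (p.2.toAdd i)
  map_one' := by simp
  map_mul' p q := by
    simp only [Prod.fst_mul, Units.val_mul, Prod.snd_mul, toAdd_mul, Pi.add_apply, pow_add,
      Finset.prod_mul_distrib, MvPolynomial.smul_eq_C_mul, map_mul]
    ring

noncomputable def F : MonoidAlgebra k (M k j) →ₐ[k] MvPolynomial (Fin j) k :=
  MonoidAlgebra.lift k _ (M k j) (φ k j)

noncomputable instance : Algebra (MonoidAlgebra k kˣ) (MvPolynomial (Fin j) k) :=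
  ((algebraMap k (MvPolynomial (Fin j) k)).comp
    (algebraMap (MonoidAlgebra k kˣ) k)).toAlgebra

instance : IsScalarTower (MonoidAlgebra k kˣ) k (MvPolynomial (Fin j) k) :=
  IsScalarTower.of_algebraMap_eq fun _ => rfl

lemma algebraMap_R_k (u : kˣ) (c : k) :
    algebraMap (MonoidAlgebra k kˣ) k (MonoidAlgebra.single u c) = c * u := by
  show (MonoidAlgebra.lift k k kˣ) (Units.coeHom k) (MonoidAlgebra.single u c) = c * u
  rw [MonoidAlgebra.lift_single]
  simp [smul_eq_mul]

lemma algebraMap_R_MA (u : kˣ) (c : k) :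
    algebraMap (MonoidAlgebra k kˣ) (MA k j) (MonoidAlgebra.single u c) =
      (MonoidAlgebra.single ((u, 1) : M k j) c : MA k j) := by
  show (MonoidAlgebra.mapDomainAlgHom k k (ι k j)) (MonoidAlgebra.single u c) = _
  simp only [MonoidAlgebra.mapDomainAlgHom_apply, MonoidAlgebra.mapDomain_single]
  rfl

lemma F_comm :
    (F k j).comp (MonoidAlgebra.mapDomainAlgHom k k (ι k j)) =
      (Algebra.ofId k (MvPolynomial (Fin j) k)).comp
        ((MonoidAlgebra.lift k k kˣ) (Units.coeHom k)) := by
  refine MonoidAlgebra.algHom_ext ?_ (Subsingleton.elim _ _)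
  intro u
  simp only [AlgHom.coe_comp, Function.comp_apply, MonoidAlgebra.mapDomainAlgHom_apply,
    Finsupp.mapDomain_single, MonoidAlgebra.mapDomain_single, MonoidAlgebra.lift_single, one_smul]
  show (MonoidAlgebra.lift k _ (M k j) (φ k j)) (MonoidAlgebra.single ((u, 1) : M k j) 1) = _
  rw [MonoidAlgebra.lift_single]
  simp [φ, Algebra.ofId_apply, MvPolynomial.algebraMap_eq, MvPolynomial.smul_eq_C_mul]

noncomputable def F' : MA k j →ₐ[MonoidAlgebra k kˣ] MvPolynomial (Fin j) k :=
  { (F k j).toRingHom with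
    commutes' := fun r => by
      have := congrArg (fun ψ => ψ r) (F_comm k j)
      exact this }

noncomputable def fhom0 :
    (MA k j ⊗[MonoidAlgebra k kˣ] k) →ₐ[MonoidAlgebra k kˣ] MvPolynomial (Fin j) k :=
  Algebra.TensorProduct.productMap (F' k j)
    (IsScalarTower.toAlgHom (MonoidAlgebra k kˣ) k (MvPolynomial (Fin j) k))

noncomputable def fhom : (MA k j ⊗[MonoidAlgebra k kˣ] k) →ₐ[k] MvPolynomial (Fin j) k :=
  { (fhom0 k j).toRingHom with
    commutes' := fun c => by
      show fhom0 k j (tm k j (algebraMap k (MA k j) c) 1) = algebraMap k _ c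
      rw [show fhom0 k j (tm k j (algebraMap k (MA k j) c) 1)
            = F' k j (algebraMap k (MA k j) c) * 1 from rfl]
      rw [mul_one]
      exact (F k j).commutes c }

noncomputable def ghom : MvPolynomial (Fin j) k →ₐ[k] (MA k j ⊗[MonoidAlgebra k kˣ] k) :=
  MvPolynomial.aeval fun i =>
    tm k j (MonoidAlgebra.single ((1, Multiplicative.ofAdd (Pi.single i 1)) : M k j) (1 : k)) 1

lemma fhom_tm (u : kˣ) (w : Multiplicative (Fin j → ℕ)) (c : k) :
    fhom k j (tm k j (MonoidAlgebra.single ((u, w) : M k j) c) 1) =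
      c • ((u : k) • ∏ i, MvPolynomial.X i ^ (w.toAdd i)) := by
  have h0 : fhom k j (tm k j (MonoidAlgebra.single ((u, w) : M k j) c) 1)
      = F' k j (MonoidAlgebra.single ((u, w) : M k j) c : MA k j) *
        (IsScalarTower.toAlgHom (MonoidAlgebra k kˣ) k (MvPolynomial (Fin j) k)) 1 := rfl
  rw [h0, map_one, mul_one]
  show (MonoidAlgebra.lift k _ (M k j) (φ k j)) (MonoidAlgebra.single ((u, w) : M k j) c) = _
  rw [MonoidAlgebra.lift_single]
  rfl

lemma move (r : MonoidAlgebra k kˣ) (x : MA k j) (y : k) :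
    tm k j (algebraMap (MonoidAlgebra k kˣ) (MA k j) r * x) y
      = tm k j x (algebraMap (MonoidAlgebra k kˣ) k r * y) := by
  show ((algebraMap (MonoidAlgebra k kˣ) (MA k j) r * x) ⊗ₜ[MonoidAlgebra k kˣ] y :
      (MA k j) ⊗[MonoidAlgebra k kˣ] k) = _
  rw [← Algebra.smul_def, ← Algebra.smul_def]
  exact TensorProduct.smul_tmul r x y

lemma smul_tm (c : k) (x : MA k j) (y : k) :
    c • tm k j x y = tm k j (c • x) y :=
  rfl

-- x ⊗ c = (c • x) ⊗ 1
lemma tmul_eq (x : MA k j) (c : k) :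
    tm k j x c = tm k j (c • x) 1 := by
  have h1 : c = algebraMap (MonoidAlgebra k kˣ) k (MonoidAlgebra.single (1 : kˣ) c) * 1 := by
    rw [algebraMap_R_k]; simp
  have h2 : algebraMap (MonoidAlgebra k kˣ) (MA k j) (MonoidAlgebra.single (1 : kˣ) c) * x
      = c • x := by
    rw [algebraMap_R_MA]
    have h3 : (MonoidAlgebra.single ((1, 1) : M k j) c : MA k j)
        = c • (1 : MA k j) := by
      show (MonoidAlgebra.single ((1, 1) : M k j) c : MonoidAlgebra k (M k j))
        = c • (1 : MonoidAlgebra k (M k j))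
      rw [MonoidAlgebra.one_def, MonoidAlgebra.smul_single', mul_one]
      rfl
    rw [h3, smul_mul_assoc, one_mul]
  conv_lhs => rw [h1]
  rw [← move, h2]

lemma single_tm (u : kˣ) (w : Multiplicative (Fin j → ℕ)) :
    tm k j (MonoidAlgebra.single ((u, w) : M k j) (1 : k)) 1 =
      (u : k) • tm k j (MonoidAlgebra.single ((1, w) : M k j) (1 : k)) 1 := by
  set y : MA k j := (MonoidAlgebra.single ((1, w) : M k j) (1:k) : MA k j) with hy
  have h1 : (MonoidAlgebra.single ((u, w) : M k j) (1:k) : MA k j) =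
      algebraMap (MonoidAlgebra k kˣ) (MA k j) (MonoidAlgebra.single u (1:k)) * y := by
    rw [hy, algebraMap_R_MA]
    show _ = (MonoidAlgebra.single ((u, 1) : M k j) (1:k) : MonoidAlgebra k (M k j)) *
      MonoidAlgebra.single ((1, w) : M k j) (1:k)
    rw [MonoidAlgebra.single_mul_single]
    simp
  rw [h1, move, algebraMap_R_k, one_mul, tmul_eq, smul_tm]
  norm_num

lemma tm_one : tm k j 1 1 = (1 : (MA k j) ⊗[MonoidAlgebra k kˣ] k) := rfl

lemma tm_mul (a b : MA k j) : tm k j a 1 * tm k j b 1 = tm k j (a * b) 1 := by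
  show (a ⊗ₜ[MonoidAlgebra k kˣ] (1:k)) * (b ⊗ₜ[MonoidAlgebra k kˣ] (1:k)) = _
  rw [Algebra.TensorProduct.tmul_mul_tmul, one_mul]
  rfl

/-- `a ↦ a ⊗ₜ 1` as a monoid hom. -/
noncomputable def tmh : MA k j →* (MA k j) ⊗[MonoidAlgebra k kˣ] k where
  toFun a := tm k j a 1
  map_one' := tm_one k j
  map_mul' a b := (tm_mul k j a b).symm

lemma prod_ofAdd (n : Fin j → ℕ) :
    (∏ i, (Multiplicative.ofAdd (Pi.single i 1 : Fin j → ℕ)) ^ (n i) :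
      Multiplicative (Fin j → ℕ)) = Multiplicative.ofAdd n := by
  apply Multiplicative.toAdd.injective
  rw [toAdd_prod]
  simp only [toAdd_pow, toAdd_ofAdd]
  rw [show (∑ i, n i • (Pi.single i 1 : Fin j → ℕ)) = ∑ i, Pi.single i (n i) by
    refine Finset.sum_congr rfl fun i _ => ?_
    ext l
    by_cases hl : l = i <;> simp [Pi.single_apply, hl]]
  exact Finset.univ_sum_single n

lemma prod_single (n : Fin j → ℕ) :
    (∏ i, (MonoidAlgebra.single
        ((1, Multiplicative.ofAdd (Pi.single i 1)) : M k j) (1:k) : MA k j) ^ (n i)) =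
      (MonoidAlgebra.single ((1, Multiplicative.ofAdd n) : M k j) (1:k) : MA k j) := by
  have h : ∀ m : M k j, (MonoidAlgebra.single m (1:k) : MA k j) = MonoidAlgebra.of k (M k j) m :=
    fun m => rfl
  simp only [h]
  simp only [← map_pow]
  rw [← map_prod]
  congr 1
  refine Prod.ext ?_ ?_
  · simp [Prod.fst_prod]
  · simp only [Prod.snd_prod]
    simpa using prod_ofAdd j n

lemma prod_tm (n : Fin j → ℕ) :
    (∏ i, (tm k j (MonoidAlgebra.single
        ((1, Multiplicative.ofAdd (Pi.single i 1)) : M k j) (1:k)) 1) ^ (n i)) =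
      tm k j (MonoidAlgebra.single ((1, Multiplicative.ofAdd n) : M k j) (1:k)) 1 := by
  have h : ∀ a : MA k j, tm k j a 1 = tmh k j a := fun a => rfl
  have h2 := congrArg (tmh k j) (prod_single k j n)
  erw [map_prod] at h2
  erw [Finset.prod_congr rfl fun i _ => map_pow (tmh k j) _ (n i)] at h2
  exact h2

lemma ghom_X (i : Fin j) :
    ghom k j (MvPolynomial.X i) =
      tm k j (MonoidAlgebra.single
        ((1, Multiplicative.ofAdd (Pi.single i 1)) : M k j) (1:k)) 1 :=
  MvPolynomial.aeval_X _ i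

lemma fg : (fhom k j).comp (ghom k j) = AlgHom.id k (MvPolynomial (Fin j) k) := by
  apply MvPolynomial.algHom_ext
  intro i
  rw [AlgHom.comp_apply, ghom_X, AlgHom.id_apply]
  rw [fhom_tm]
  simp only [one_smul, Units.val_one, toAdd_ofAdd]
  rw [Finset.prod_eq_single i (fun b _ hb => by
      rw [Pi.single_eq_of_ne hb, pow_zero]) (fun h => absurd (Finset.mem_univ i) h)]
  rw [Pi.single_eq_same, pow_one]

lemma gf_single (u : kˣ) (w : Multiplicative (Fin j → ℕ)) :
    ghom k j (fhom k j (tm k j (MonoidAlgebra.single ((u, w) : M k j) (1:k)) 1)) =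
      tm k j (MonoidAlgebra.single ((u, w) : M k j) (1:k)) 1 := by
  rw [fhom_tm, one_smul, map_smul, map_prod]
  simp only [map_pow, ghom_X]
  rw [prod_tm k j w.toAdd]
  rw [show Multiplicative.ofAdd (Multiplicative.toAdd w) = w from ofAdd_toAdd w]
  exact (single_tm k j u w).symm

lemma tm_add (a b : MA k j) (c : k) :
    tm k j (a + b) c = tm k j a c + tm k j b c :=
  TensorProduct.add_tmul a b c

lemma gf_elt (z : MA k j) : ghom k j (fhom k j (tm k j z 1)) = tm k j z 1 := by
  induction z using MonoidAlgebra.induction_on with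
  | of m =>
    obtain ⟨u, w⟩ := m
    exact gf_single k j u w
  | add a b ha hb =>
    erw [tm_add k j a b 1]
    rw [map_add, map_add, ha, hb]
  | smul r f hf =>
    erw [← smul_tm k j r f 1]
    rw [map_smul, map_smul, hf]

lemma gf : (ghom k j).comp (fhom k j) =
    AlgHom.id k ((MA k j) ⊗[MonoidAlgebra k kˣ] k) := by
  apply AlgHom.ext
  intro x
  rw [AlgHom.comp_apply, AlgHom.id_apply]
  refine @TensorProduct.induction_on (MonoidAlgebra k kˣ) _ (MA k j) k _ _
    (Algebra.toModule) (Algebra.toModule)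
    (fun y => (ghom k j) ((fhom k j) y) = y) x ?_ (fun a c => ?_) (fun a b ha hb => ?_)
  · simp
  · show ghom k j (fhom k j (tm k j a c)) = tm k j a c
    rw [tmul_eq]
    exact gf_elt k j (c • a)
  · rw [map_add, map_add, ha, hb]

theorem stmt0 :
    ∃ e : (MA k j) ⊗[MonoidAlgebra k kˣ] k ≃ₐ[k] MvPolynomial (Fin j) k,
      ∀ (u : kˣ) (n : Fin j → ℕ),
        e ((MonoidAlgebra.single ((u, Multiplicative.ofAdd n) : M k j) (1 : k) : MA k j)
            ⊗ₜ[MonoidAlgebra k kˣ] (1 : k)) =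
          (u : k) • ∏ i, (MvPolynomial.X i : MvPolynomial (Fin j) k) ^ n i := by
  refine ⟨AlgEquiv.ofAlgHom (fhom k j) (ghom k j) (fg k j) (gf k j), fun u n => ?_⟩
  show fhom k j (tm k j (MonoidAlgebra.single ((u, Multiplicative.ofAdd n) : M k j) (1:k)) 1) = _
  rw [fhom_tm, one_smul]
  rfl

end Stmt0
end

section
/- Let k be a field and j a natural number, and consider the commutative group G = kˣ × (Fin j → ℤ) with the group homomorphism ι : kˣ →* G, u ↦ (u, 0). Then the set of k-algebra homomorphisms f : MonoidAlgebra k G →ₐ[k] k satisfying f(single (u, 0) 1) = u for every u ∈ kˣ is in bijection with Fin j → kˣ, the bijection sending f to the tuple (f(single (1, eᵢ) 1))_{i}, where eᵢ ∈ (Fin j → ℤ) is the i-th standard basis vector; in particular each value f(single (1, eᵢ) 1) is a nonzero element of k. -/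
/-!
Statement 2: Let `k` be a field and `j : ℕ`, and consider the commutative group
`G = kˣ × ℤ^j` (with `ℤ^j` written multiplicatively) together with `ι : kˣ →* G`, `u ↦ (u, 0)`.
Then the set of `k`-algebra homomorphisms `f : MonoidAlgebra k G →ₐ[k] k` with
`f (single (u, 0) 1) = u` for all `u : kˣ` is in bijection with `Fin j → kˣ`, the bijection
sending `f` to the tuple `(f (single (1, eᵢ) 1))ᵢ`; in particular each value
`f (single (1, eᵢ) 1)` is a nonzero element of `k`.
-/

section Aux
variable (k : Type*) [Field k] (j : ℕ)

noncomputable def psiAux (lam : Fin j → kˣ) : Multiplicative (Fin j → ℤ) →* kˣ where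
  toFun m := ∏ i, lam i ^ (Multiplicative.toAdd m i)
  map_one' := by simp
  map_mul' a b := by
    simp [zpow_add, Finset.prod_mul_distrib]

noncomputable def phiAux (lam : Fin j → kˣ) : (kˣ × Multiplicative (Fin j → ℤ)) →* k :=
  (Units.coeHom k).comp
    ((MonoidHom.fst kˣ _) * ((psiAux k j lam).comp (MonoidHom.snd _ _)))

noncomputable def fOf (lam : Fin j → kˣ) :
    MonoidAlgebra k (kˣ × Multiplicative (Fin j → ℤ)) →ₐ[k] k :=
  MonoidAlgebra.lift k k _ (phiAux k j lam)

lemma fOf_single (lam : Fin j → kˣ) (g : kˣ × Multiplicative (Fin j → ℤ)) :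
    fOf k j lam (MonoidAlgebra.single g 1) =
      (g.1 : k) * ∏ i, ((lam i : k) ^ (Multiplicative.toAdd g.2 i)) := by
  simp [fOf, phiAux, psiAux, MonoidAlgebra.lift_single]

noncomputable def FuAux (f : MonoidAlgebra k (kˣ × Multiplicative (Fin j → ℤ)) →ₐ[k] k) :
    (kˣ × Multiplicative (Fin j → ℤ)) →* kˣ :=
  ((f : MonoidAlgebra k (kˣ × Multiplicative (Fin j → ℤ)) →* k).comp
    (MonoidAlgebra.of k _)).toHomUnits

lemma FuAux_coe (f : MonoidAlgebra k (kˣ × Multiplicative (Fin j → ℤ)) →ₐ[k] k)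
    (g : kˣ × Multiplicative (Fin j → ℤ)) :
    (FuAux k j f g : k) = f (MonoidAlgebra.single g 1) := by
  simp [FuAux, MonoidAlgebra.of_apply]

lemma hom_pi_int {A : Type*} [CommGroup A] (H : Multiplicative (Fin j → ℤ) →* A)
    (m : Fin j → ℤ) :
    H (Multiplicative.ofAdd m) =
      ∏ i, H (Multiplicative.ofAdd (Pi.single i (1:ℤ))) ^ m i := by
  have hm : m = ∑ i, Pi.single i (m i) := (Finset.univ_sum_single m).symm
  conv_lhs => rw [hm]
  have : Multiplicative.ofAdd (∑ i : Fin j, Pi.single i (m i)) =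
      ∏ i : Fin j, Multiplicative.ofAdd (Pi.single i (m i)) := by
    simp
  rw [this, map_prod]
  refine Finset.prod_congr rfl fun i _ => ?_
  have h1 : Pi.single i (m i) = m i • (Pi.single i 1 : Fin j → ℤ) := by
    rw [← Pi.single_smul]; norm_num
  rw [h1, ofAdd_zsmul, map_zpow]

end Aux

section Aux2
variable (k : Type*) [Field k] (j : ℕ)

lemma FuAux_fst (f : MonoidAlgebra k (kˣ × Multiplicative (Fin j → ℤ)) →ₐ[k] k)
    (hf : ∀ u : kˣ,
      f (MonoidAlgebra.single ((u, 1) : kˣ × Multiplicative (Fin j → ℤ)) (1 : k)) = (u : k))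
    (u : kˣ) : FuAux k j f (u, 1) = u := by
  ext
  rw [FuAux_coe, hf]

lemma FuAux_snd (f : MonoidAlgebra k (kˣ × Multiplicative (Fin j → ℤ)) →ₐ[k] k)
    (m : Multiplicative (Fin j → ℤ)) :
    FuAux k j f (1, m) =
      ∏ i, FuAux k j f (1, Multiplicative.ofAdd (Pi.single i (1:ℤ))) ^ (Multiplicative.toAdd m i) := by
  have := hom_pi_int j ((FuAux k j f).comp (MonoidHom.inr kˣ (Multiplicative (Fin j → ℤ))))
    (Multiplicative.toAdd m)
  simpa using this

end Aux2

theorem stmt2 (k : Type*) [Field k] (j : ℕ) :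
    ∃ e : {f : MonoidAlgebra k (kˣ × Multiplicative (Fin j → ℤ)) →ₐ[k] k //
            ∀ u : kˣ,
              f (MonoidAlgebra.single ((u, 1) : kˣ × Multiplicative (Fin j → ℤ)) (1 : k)) =
                (u : k)} ≃ (Fin j → kˣ),
      (∀ f (i : Fin j),
        ((e f) i : k) =
          f.1 (MonoidAlgebra.single
            ((1, Multiplicative.ofAdd (Pi.single i (1 : ℤ))) : kˣ × Multiplicative (Fin j → ℤ))
            (1 : k))) ∧
      (∀ f : {f : MonoidAlgebra k (kˣ × Multiplicative (Fin j → ℤ)) →ₐ[k] k //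
            ∀ u : kˣ,
              f (MonoidAlgebra.single ((u, 1) : kˣ × Multiplicative (Fin j → ℤ)) (1 : k)) =
                (u : k)},
        ∀ i : Fin j,
        f.1 (MonoidAlgebra.single
          ((1, Multiplicative.ofAdd (Pi.single i (1 : ℤ))) : kˣ × Multiplicative (Fin j → ℤ))
          (1 : k)) ≠ 0) := by
  classical
  have hprop : ∀ lam : Fin j → kˣ, ∀ u : kˣ,
      fOf k j lam (MonoidAlgebra.single ((u, 1) : kˣ × Multiplicative (Fin j → ℤ)) (1 : k))
        = (u : k) := by
    intro lam u
    rw [fOf_single]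
    simp
  refine ⟨{
    toFun := fun f i => FuAux k j f.1 (1, Multiplicative.ofAdd (Pi.single i (1:ℤ)))
    invFun := fun lam => ⟨fOf k j lam, hprop lam⟩
    left_inv := ?_
    right_inv := ?_ }, ?_, ?_⟩
  · rintro ⟨f, hf⟩
    apply Subtype.ext
    refine MonoidAlgebra.algHom_ext ?_ (Subsingleton.elim _ _)
    rintro ⟨u, m⟩
    have h1 : FuAux k j f (u, m)
        = u * ∏ i, FuAux k j f (1, Multiplicative.ofAdd (Pi.single i (1:ℤ)))
            ^ (Multiplicative.toAdd m i) := by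
      have hg : ((u, m) : kˣ × Multiplicative (Fin j → ℤ)) = (u, 1) * (1, m) := by simp
      rw [hg, map_mul, FuAux_fst k j f hf u, FuAux_snd k j f m]
    show fOf k j _ _ = f _
    rw [fOf_single, ← FuAux_coe k j f, h1]
    push_cast
    rfl
  · intro lam
    funext i
    ext
    show (FuAux k j (fOf k j lam) _ : k) = _
    rw [FuAux_coe]
    show fOf k j lam _ = _
    rw [fOf_single]
    have hu : (∏ i', ((lam i' : k)) ^ ((Pi.single i (1:ℤ) : Fin j → ℤ) i')) = (lam i : k) := by
      rw [Finset.prod_eq_single i (fun b _ hb => by simp [Pi.single_apply, hb]) (by simp)]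
      simp
    simpa using hu
  · rintro ⟨f, hf⟩ i
    show (FuAux k j f _ : k) = _
    rw [FuAux_coe]
  · rintro ⟨f, hf⟩ i
    rw [← FuAux_coe]
    exact Units.ne_zero _
end

section
/- Let Q be the quiver with four vertices v₀, v₁, v₂, v₃ and three arrows f : v₀ → v₁, g : v₂ → v₁, h : v₂ → v₃, and let P = Paths Q be the free category on Q (the category denoted ←Δ[3], i.e. • → • ← • → •). Let [2] denote the linearly ordered category on {0, 1, 2} (e.g. Fin 3 with its order), and let F : P ⥤ [2] be the functor determined by F(v₀) = 0, F(v₁) = F(v₂) = 1, F(v₃) = 2, sending f to the morphism 0 ⟶ 1, g to the identity of 1, and h to the morphism 1 ⟶ 2. Then F exhibits [2] as the localization of P at the morphism property generated by {g}; that is, F is a localization functor with respect to W = {g}. -/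
/-!
Statement 3: Let `Q` be the quiver with vertices `v₀, v₁, v₂, v₃` and arrows
`f : v₀ → v₁`, `g : v₂ → v₁`, `h : v₂ → v₃`, and let `P = Paths Q` (the category
`* → * ← * → *`). Let `F : P ⥤ [2]` be the functor with `F v₀ = 0`, `F v₁ = F v₂ = 1`,
`F v₃ = 2`, sending `f` to `0 ⟶ 1`, `g` to `𝟙 1` and `h` to `1 ⟶ 2`. Then `F` exhibits
`[2]` as the localization of `P` at the morphism property generated by `{g}`.
-/

open CategoryTheory

namespace Stmt3

/-- The four vertices. -/
inductive V : Type
  | v0 | v1 | v2 | v3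

/-- The three arrows `f : v₀ → v₁`, `g : v₂ → v₁`, `h : v₂ → v₃`. -/
inductive Arrow : V → V → Type
  | f : Arrow .v0 .v1
  | g : Arrow .v2 .v1
  | h : Arrow .v2 .v3

instance : Quiver V := ⟨Arrow⟩

/-- The prefunctor on the quiver determined by `v₀ ↦ 0`, `v₁, v₂ ↦ 1`, `v₃ ↦ 2`,
`f ↦ (0 ⟶ 1)`, `g ↦ 𝟙 1`, `h ↦ (1 ⟶ 2)`. -/
def φ : V ⥤q Fin 3 where
  obj x := match x with
    | .v0 => 0
    | .v1 => 1
    | .v2 => 1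
    | .v3 => 2
  map e := match e with
    | .f => homOfLE (by decide)
    | .g => 𝟙 (1 : Fin 3)
    | .h => homOfLE (by decide)

/-- The functor `←Δ[3] ⥤ Δ[2]` contracting the middle (backward) morphism. -/
def F : Paths V ⥤ Fin 3 := Paths.lift φ

/-- The morphism of the path category corresponding to the arrow `g`. -/
def gMor : ((Paths.of V).obj V.v2 : Paths V) ⟶ (Paths.of V).obj V.v1 := (Paths.of V).map Arrow.g

/-- The morphism property generated by `{g}`: it holds exactly for the morphism `g`. -/
inductive WRel : ∀ ⦃X Y : Paths V⦄, (X ⟶ Y) → Prop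
  | mk : WRel gMor

/-- The morphism property generated by `{g}`, as a `MorphismProperty`. -/
def W : MorphismProperty (Paths V) := fun _ _ p => WRel p
-- auxiliary

def fMor : ((Paths.of V).obj V.v0 : Paths V) ⟶ (Paths.of V).obj V.v1 := (Paths.of V).map Arrow.f
def hMor : ((Paths.of V).obj V.v2 : Paths V) ⟶ (Paths.of V).obj V.v3 := (Paths.of V).map Arrow.h

theorem W_inverted_by_F : W.IsInvertedBy F := by
  rintro X Y p ⟨⟩
  exact ⟨⟨𝟙 (1 : Fin 3), Subsingleton.elim _ _, Subsingleton.elim _ _⟩⟩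

instance : IsIso (W.Q.map gMor) := Localization.inverts W.Q W gMor WRel.mk

/-- The comparison functor from the constructed localization. -/
noncomputable def Φ : W.Localization ⥤ Fin 3 :=
  CategoryTheory.Localization.Construction.lift F W_inverted_by_F

/-- The inverse functor. -/
noncomputable def Ψ : Fin 3 ⥤ W.Localization :=
  ComposableArrows.mk₂ (W.Q.map fMor) (inv (W.Q.map gMor) ≫ W.Q.map hMor)

lemma Ψ_map01 (x : (0 : Fin 3) ⟶ 1) : Ψ.map x = W.Q.map fMor := by
  rw [Subsingleton.elim x (homOfLE (by decide))]
  rfl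

lemma Ψ_map12 (x : (1 : Fin 3) ⟶ 2) : Ψ.map x = inv (W.Q.map gMor) ≫ W.Q.map hMor := by
  rw [Subsingleton.elim x (homOfLE (by decide))]
  rfl

lemma Ψ_map11 (x : (1 : Fin 3) ⟶ 1) : Ψ.map x = 𝟙 _ := by
  rw [Subsingleton.elim x (𝟙 _), Ψ.map_id]

/-- Components of the natural isomorphism `W.Q ≅ F ⋙ Ψ`. -/
noncomputable def σApp : ∀ (X : Paths V), W.Q.obj X ≅ (F ⋙ Ψ).obj X
  | .v0 => Iso.refl _
  | .v1 => Iso.refl _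
  | .v2 => @asIso _ _ _ _ (W.Q.map gMor) (Localization.inverts W.Q W gMor WRel.mk)
  | .v3 => Iso.refl _

lemma σ_natural_arrow : ∀ {a b : V} (e : a ⟶ b),
    W.Q.map ((Paths.of V).map e) ≫ (σApp ((Paths.of V).obj b)).hom
      = (σApp ((Paths.of V).obj a)).hom ≫ (F ⋙ Ψ).map ((Paths.of V).map e) := by
  intro a b e
  cases e using Arrow.casesOn with
  | f =>
    rw [show ((F ⋙ Ψ).map ((Paths.of V).map Arrow.f) :
        (F ⋙ Ψ).obj ((Paths.of V).obj V.v0) ⟶ (F ⋙ Ψ).obj ((Paths.of V).obj V.v1))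
        = W.Q.map fMor from Ψ_map01 (F.map (Quiver.Hom.toPath Arrow.f))]
    show W.Q.map _ ≫ 𝟙 _ = 𝟙 _ ≫ W.Q.map fMor
    simp only [Category.comp_id, Category.id_comp]
    rfl
  | g =>
    rw [show ((F ⋙ Ψ).map ((Paths.of V).map Arrow.g) :
        (F ⋙ Ψ).obj ((Paths.of V).obj V.v2) ⟶ (F ⋙ Ψ).obj ((Paths.of V).obj V.v1))
        = 𝟙 _ from Ψ_map11 (F.map (Quiver.Hom.toPath Arrow.g))]
    show W.Q.map _ ≫ 𝟙 _ = W.Q.map gMor ≫ 𝟙 _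
    simp only [Category.comp_id]
    rfl
  | h =>
    rw [show ((F ⋙ Ψ).map ((Paths.of V).map Arrow.h) :
        (F ⋙ Ψ).obj ((Paths.of V).obj V.v2) ⟶ (F ⋙ Ψ).obj ((Paths.of V).obj V.v3))
        = inv (W.Q.map gMor) ≫ W.Q.map hMor from Ψ_map12 (F.map (Quiver.Hom.toPath Arrow.h))]
    show W.Q.map _ ≫ 𝟙 _ = W.Q.map gMor ≫ inv (W.Q.map gMor) ≫ W.Q.map hMor
    simp only [Category.comp_id, IsIso.hom_inv_id_assoc]
    rfl

lemma σ_natural' {X Y : Paths V} (p : X ⟶ Y) :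
    W.Q.map p ≫ (σApp Y).hom = (σApp X).hom ≫ (F ⋙ Ψ).map p := by
  induction p using Paths.induction with
  | id =>
    rw [W.Q.map_id, (F ⋙ Ψ).map_id, Category.comp_id, Category.id_comp]
  | comp p e ih =>
    rw [W.Q.map_comp, (F ⋙ Ψ).map_comp, Category.assoc, σ_natural_arrow e, reassoc_of% ih]
    rfl

/-- The natural isomorphism `W.Q ≅ F ⋙ Ψ`. -/
noncomputable def σ : W.Q ≅ F ⋙ Ψ :=
  NatIso.ofComponents σApp (fun p => σ_natural' p)

lemma counit_eq : Ψ ⋙ Φ = 𝟭 (Fin 3) := by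
  have hobj : ∀ (x : V), Φ.obj (W.Q.obj ((Paths.of V).obj x)) = F.obj ((Paths.of V).obj x) :=
    fun x => Functor.congr_obj (Localization.Construction.fac F W_inverted_by_F) _
  refine ComposableArrows.ext₂ (hobj V.v0) (hobj V.v1) (hobj V.v3) ?_ ?_ <;>
    exact Subsingleton.elim _ _

noncomputable instance : Localization.Lifting W.Q W (F ⋙ Ψ) (Φ ⋙ Ψ) :=
  ⟨eqToIso (by rw [← Functor.assoc]; dsimp only [Φ]
               rw [Localization.Construction.fac])⟩

/-- The equivalence between the constructed localization and `Fin 3`. -/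
noncomputable def equiv : W.Localization ≌ Fin 3 :=
  CategoryTheory.Equivalence.mk Φ Ψ
    (Localization.liftNatIso W.Q W W.Q (F ⋙ Ψ) (𝟭 _) (Φ ⋙ Ψ) σ)
    (eqToIso counit_eq)

theorem stmt3 : F.IsLocalization W :=
  Functor.IsLocalization.of_equivalence_target W.Q W F equiv
    (eqToIso (show W.Q ⋙ equiv.functor = F from
      Localization.Construction.fac F W_inverted_by_F))

end Stmt3
end
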